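/- For all x, y ∈ M, the inner product ⟨a_x, a_y⟩ in ℂ^Λ equals 1 if x = y and equals 0 if x ≠ y; that is, the family {a_x}_{x∈M} is orthonormal. (This is the single-particle form of the canonical anticommutation relation {a†_{x,σ}, a_{y,τ}} = δ_{x,y} δ_{σ,τ}.) -/

import Mathlib

open Finset

private theorem decorated_key_inner {M : Type*} [Fintype M] [DecidableEq M]
    (B : Finset (M × M)) (μ : ℝ) (x y : M) :
    (inner ℂ
      (EuclideanSpace.single (Sum.inl x) (1 : ℂ)
        + (μ : ℂ) • ∑ p ∈ Finset.univ.filter (fun p : {p // p ∈ B} => (p : M × M).1 = x),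
            (EuclideanSpace.single (Sum.inr (Sum.inl p)) (1 : ℂ)
              - EuclideanSpace.single (Sum.inr (Sum.inr p)) (1 : ℂ))
        + (μ : ℂ) • ∑ p ∈ Finset.univ.filter (fun p : {p // p ∈ B} => (p : M × M).2 = x),
            (EuclideanSpace.single (Sum.inr (Sum.inl p)) (1 : ℂ)
              + EuclideanSpace.single (Sum.inr (Sum.inr p)) (1 : ℂ)))
      (EuclideanSpace.single (Sum.inl y) (1 : ℂ)
        + (μ : ℂ) • ∑ p ∈ Finset.univ.filter (fun p : {p // p ∈ B} => (p : M × M).1 = y),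
            (EuclideanSpace.single (Sum.inr (Sum.inl p)) (1 : ℂ)
              - EuclideanSpace.single (Sum.inr (Sum.inr p)) (1 : ℂ))
        + (μ : ℂ) • ∑ p ∈ Finset.univ.filter (fun p : {p // p ∈ B} => (p : M × M).2 = y),
            (EuclideanSpace.single (Sum.inr (Sum.inl p)) (1 : ℂ)
              + EuclideanSpace.single (Sum.inr (Sum.inr p)) (1 : ℂ))) : ℂ)
    = if x = y then
        (1 : ℂ) + 2 * μ ^ 2 *
          (((Finset.univ.filter fun p : {p // p ∈ B} => (p : M × M).1 = x).card : ℂ)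
            + ((Finset.univ.filter fun p : {p // p ∈ B} => (p : M × M).2 = x).card : ℂ))
      else 0 := by
  have key1 : ∑ p ∈ Finset.univ.filter (fun p : {p // p ∈ B} => (p : M × M).1 = y),
      (if (p : M × M).1 = x then (1:ℂ) else 0)
      = if y = x then ((Finset.univ.filter fun p : {p // p ∈ B} => (p : M × M).1 = y).card : ℂ) else 0 := by
    rw [Finset.sum_congr rfl (fun p hp => by
      rw [(Finset.mem_filter.mp hp).2] : ∀ p ∈ _, _ = if y = x then (1:ℂ) else 0)]
    simp only [Finset.sum_const, nsmul_eq_mul]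
    split_ifs <;> simp
  have key2 : ∑ p ∈ Finset.univ.filter (fun p : {p // p ∈ B} => (p : M × M).2 = y),
      (if (p : M × M).2 = x then (1:ℂ) else 0)
      = if y = x then ((Finset.univ.filter fun p : {p // p ∈ B} => (p : M × M).2 = y).card : ℂ) else 0 := by
    rw [Finset.sum_congr rfl (fun p hp => by
      rw [(Finset.mem_filter.mp hp).2] : ∀ p ∈ _, _ = if y = x then (1:ℂ) else 0)]
    simp only [Finset.sum_const, nsmul_eq_mul]
    split_ifs <;> simp
  simp only [inner_add_left, inner_add_right, inner_smul_left, inner_smul_right,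
    sum_inner, inner_sum, inner_sub_left, inner_sub_right,
    EuclideanSpace.inner_single_left, EuclideanSpace.inner_single_right,
    EuclideanSpace.single_apply, map_one, one_mul, mul_one, map_zero,
    apply_ite (starRingEnd ℂ), Complex.conj_ofReal,
    Sum.inl.injEq, Sum.inr.injEq, reduceCtorEq, if_false,
    sub_zero, zero_sub, add_zero, zero_add, Subtype.coe_inj,
    Finset.sum_ite_eq, Finset.mem_filter, Finset.mem_univ, true_and,
    Finset.sum_sub_distrib, Finset.sum_add_distrib, mul_zero, zero_mul,
    sum_const, nsmul_eq_mul, neg_neg, sub_neg_eq_add]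
  simp only [mul_neg, Finset.sum_neg_distrib, ← Finset.mul_sum, key1, key2]
  by_cases h : x = y
  · subst h; simp; ring
  · have h2 : ¬ y = x := fun hh => h hh.symm
    simp [h, h2]

private theorem decorated_card_sum {M : Type*} [Fintype M] [DecidableEq M]
    (B : Finset (M × M))
    (hasym : ∀ p ∈ B, (p.2, p.1) ∉ B)
    (ζ : ℕ)
    (hreg : ∀ x : M,
      (Finset.univ.filter fun y : M => (x, y) ∈ B ∨ (y, x) ∈ B).card = ζ)
    (x : M) :
    (Finset.univ.filter fun p : {p // p ∈ B} => (p : M × M).1 = x).card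
      + (Finset.univ.filter fun p : {p // p ∈ B} => (p : M × M).2 = x).card = ζ := by
  have h1 : (Finset.univ.filter fun p : {p // p ∈ B} => (p : M × M).1 = x).card
      = (Finset.univ.filter fun y : M => (x, y) ∈ B).card := by
    refine Finset.card_bij (fun p _ => (p : M × M).2) ?_ ?_ ?_
    · rintro ⟨⟨a, b⟩, hab⟩ hp
      simp only [mem_filter, mem_univ, true_and] at hp ⊢
      subst hp; exact hab
    · rintro ⟨⟨a, b⟩, hab⟩ hp ⟨⟨a', b'⟩, hab'⟩ hp' h
      simp only [mem_filter, mem_univ, true_and] at hp hp'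
      simp_all
    · intro y hy
      simp only [mem_filter, mem_univ, true_and] at hy
      exact ⟨⟨(x, y), hy⟩, by simp⟩
  have h2 : (Finset.univ.filter fun p : {p // p ∈ B} => (p : M × M).2 = x).card
      = (Finset.univ.filter fun y : M => (y, x) ∈ B).card := by
    refine Finset.card_bij (fun p _ => (p : M × M).1) ?_ ?_ ?_
    · rintro ⟨⟨a, b⟩, hab⟩ hp
      simp only [mem_filter, mem_univ, true_and] at hp ⊢
      subst hp; exact hab
    · rintro ⟨⟨a, b⟩, hab⟩ hp ⟨⟨a', b'⟩, hab'⟩ hp' h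
      simp only [mem_filter, mem_univ, true_and] at hp hp'
      simp_all
    · intro y hy
      simp only [mem_filter, mem_univ, true_and] at hy
      exact ⟨⟨(y, x), hy⟩, by simp⟩
  rw [h1, h2, ← hreg x, Finset.filter_or]
  rw [Finset.card_union_of_disjoint]
  rw [Finset.disjoint_filter]
  intro y _ hy1 hy2
  exact hasym (x, y) hy1 hy2

/-- On the decorated lattice `Λ = M ⊕ B ⊕ B`, the vectors
`a_x = (1+2ζμ²)^{-1/2} (e_x + μ Σ_{(x,y)∈B} (e_{u(x,y)} - e_{ū(x,y)})
 + μ Σ_{(y,x)∈B} (e_{u(y,x)} + e_{ū(y,x)}))` form an orthonormal family: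
`⟨a_x, a_y⟩ = δ_{x,y}`. -/
theorem a_vectors_orthonormal
    {M : Type*} [Fintype M] [DecidableEq M] [Nonempty M]
    (B : Finset (M × M))
    (hirr : ∀ p ∈ B, p.1 ≠ p.2)
    (hasym : ∀ p ∈ B, (p.2, p.1) ∉ B)
    (ζ : ℕ) (hζ : 1 ≤ ζ)
    (hreg : ∀ x : M,
      (Finset.univ.filter fun y : M => (x, y) ∈ B ∨ (y, x) ∈ B).card = ζ)
    (μ : ℝ) (hμ : 0 < μ)
    (a : M → EuclideanSpace ℂ (M ⊕ ({p // p ∈ B} ⊕ {p // p ∈ B})))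
    (ha : ∀ x : M, a x = (((Real.sqrt (1 + 2 * ζ * μ ^ 2))⁻¹ : ℝ) : ℂ) •
      (EuclideanSpace.single (Sum.inl x) (1 : ℂ)
        + (μ : ℂ) • ∑ p ∈ Finset.univ.filter (fun p : {p // p ∈ B} => (p : M × M).1 = x),
            (EuclideanSpace.single (Sum.inr (Sum.inl p)) (1 : ℂ)
              - EuclideanSpace.single (Sum.inr (Sum.inr p)) (1 : ℂ))
        + (μ : ℂ) • ∑ p ∈ Finset.univ.filter (fun p : {p // p ∈ B} => (p : M × M).2 = x),
            (EuclideanSpace.single (Sum.inr (Sum.inl p)) (1 : ℂ)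
              + EuclideanSpace.single (Sum.inr (Sum.inr p)) (1 : ℂ)))) :
    ∀ x y : M, (inner ℂ (a x) (a y) : ℂ) = if x = y then 1 else 0 := by
  intro x y
  rw [ha x, ha y, inner_smul_left, inner_smul_right, decorated_key_inner B μ x y,
    Complex.conj_ofReal]
  by_cases h : x = y
  · subst h
    simp only [if_pos rfl]
    have hc := decorated_card_sum B hasym ζ hreg x
    have hcast : (((Finset.univ.filter fun p : {p // p ∈ B} => (p : M × M).1 = x).card : ℂ)
        + ((Finset.univ.filter fun p : {p // p ∈ B} => (p : M × M).2 = x).card : ℂ)) = (ζ : ℂ) := by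
      exact_mod_cast congrArg (Nat.cast : ℕ → ℂ) hc
    rw [hcast]
    have ht : (0:ℝ) < 1 + 2 * ζ * μ ^ 2 := by positivity
    have hr : ((Real.sqrt (1 + 2 * ζ * μ ^ 2))⁻¹) * ((Real.sqrt (1 + 2 * ζ * μ ^ 2))⁻¹)
        * (1 + 2 * ζ * μ ^ 2) = 1 := by
      rw [← mul_inv, Real.mul_self_sqrt ht.le]
      exact inv_mul_cancel₀ ht.ne'
    calc (((Real.sqrt (1 + 2 * ζ * μ ^ 2))⁻¹ : ℝ) : ℂ)
          * ((((Real.sqrt (1 + 2 * ζ * μ ^ 2))⁻¹ : ℝ) : ℂ) * (1 + 2 * μ ^ 2 * (ζ : ℂ)))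
        = ((((Real.sqrt (1 + 2 * ζ * μ ^ 2))⁻¹) * ((Real.sqrt (1 + 2 * ζ * μ ^ 2))⁻¹)
            * (1 + 2 * ζ * μ ^ 2) : ℝ) : ℂ) := by push_cast; ring
      _ = 1 := by rw [hr]; norm_num
  · simp [h]
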